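/- Let X be a Banach space such that every point of the unit sphere S_X is a strongly exposed point of B_X. Then the set {(x, x*) ∈ strexp(B_X) × SE(X) : ‖x*‖ = x*(x) = 1} is dense in Π(X) = {(x, x*) ∈ S_X × S_{X*} : x*(x) = 1}. In particular X has property [P]: for every ε ∈ (0,1) there is η > 0 such that whenever x ∈ S_X, x* ∈ S_{X*} satisfy Re x*(x) > 1 − η, there exist y ∈ S_X and a strongly exposing functional y* ∈ SE(X) with ‖y*‖ = y*(y) = 1, ‖y* − x*‖ < ε, and ‖y − x‖ < ε. -/

import Mathlib

set_option maxHeartbeats 1000000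


open Filter Topology RCLike Bornology

/-- `f` strongly exposes the bounded set `C` at `x₀`. -/
def StronglyExposes {𝕜 X : Type} [RCLike 𝕜] [NormedAddCommGroup X] [NormedSpace 𝕜 X]
    (f : X →L[𝕜] 𝕜) (C : Set X) (x₀ : X) : Prop :=
  x₀ ∈ C ∧ (∀ x ∈ C, re (f x) ≤ re (f x₀)) ∧
    ∀ u : ℕ → X, (∀ n, u n ∈ C) →
      Tendsto (fun n => re (f (u n))) atTop (𝓝 (re (f x₀))) →
      Tendsto u atTop (𝓝 x₀)

/-- `f` strongly exposes the closed unit ball at `x₀`. -/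
def StronglyExposesBall {𝕜 X : Type} [RCLike 𝕜] [NormedAddCommGroup X] [NormedSpace 𝕜 X]
    (f : X →L[𝕜] 𝕜) (x₀ : X) : Prop :=
  ‖x₀‖ ≤ 1 ∧ re (f x₀) = ‖f‖ ∧
    ∀ u : ℕ → X, (∀ n, ‖u n‖ ≤ 1) →
      Tendsto (fun n => re (f (u n))) atTop (𝓝 ‖f‖) →
      Tendsto u atTop (𝓝 x₀)

/-- `T` absolutely strongly exposes the closed unit ball at `x₀`. -/
def AbsStronglyExposes {𝕜 X Y : Type} [RCLike 𝕜] [NormedAddCommGroup X] [NormedSpace 𝕜 X]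
    [NormedAddCommGroup Y] [NormedSpace 𝕜 Y] (T : X →L[𝕜] Y) (x₀ : X) : Prop :=
  ‖x₀‖ ≤ 1 ∧
    ∀ u : ℕ → X, (∀ n, ‖u n‖ ≤ 1) →
      Tendsto (fun n => ‖T (u n)‖) atTop (𝓝 ‖T‖) →
      ∃ θ : ℕ → 𝕜, (∀ n, ‖θ n‖ = 1) ∧ Tendsto (fun n => θ n • u n) atTop (𝓝 x₀)

section AuxLemmas

variable {𝕜 X : Type} [RCLike 𝕜] [NormedAddCommGroup X] [NormedSpace 𝕜 X]


lemma clm_norm_smul' {K E F : Type*} [NontriviallyNormedField K] [NormedAddCommGroup E]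
    [NormedAddCommGroup F] [NormedSpace K E] [NormedSpace K F] (c : K) (h : E →L[K] F) :
    ‖c • h‖ = ‖c‖ * ‖h‖ := by
  rcases eq_or_ne c 0 with rfl | hc
  · have h0 : (0:K) • h = 0 := by ext z; simp
    simp [h0]
  · refine le_antisymm (h.opNorm_smul_le c) ?_
    have h2 := (c • h).opNorm_smul_le c⁻¹
    rw [inv_smul_smul₀ hc, norm_inv] at h2
    have hc' : (0:ℝ) < ‖c‖ := norm_pos_iff.mpr hc
    calc ‖c‖ * ‖h‖ ≤ ‖c‖ * (‖c‖⁻¹ * ‖c • h‖) := by gcongr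
    _ = ‖c • h‖ := by field_simp

lemma aux_unit' {𝕜 : Type} [RCLike 𝕜] {z : 𝕜} (h1 : ‖z‖ ≤ 1) (h2 : re z = 1) : z = 1 := by
  have hsq : ‖z‖ ^ 2 = re z ^ 2 + im z ^ 2 := by
    rw [RCLike.norm_sq_eq_def]; ring
  have him : im z = 0 := by nlinarith [norm_nonneg z]
  have h3 := RCLike.re_add_im z
  rw [h2, him] at h3
  simpa using h3.symm

lemma norm_apply_le_of_re_le {𝕜 X : Type} [RCLike 𝕜] [NormedAddCommGroup X] [NormedSpace 𝕜 X]
    {f : X →L[𝕜] 𝕜} {C : ℝ} (h : ∀ z : X, re (f z) ≤ C * ‖z‖) (z : X) : ‖f z‖ ≤ C * ‖z‖ := by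
  rcases eq_or_ne (f z) 0 with h0 | h0
  · rw [h0, norm_zero]
    have h1 := h z
    rw [h0] at h1
    simpa using h1
  · set θ : 𝕜 := (‖f z‖ : 𝕜) / f z with hθ
    have hθn : ‖θ‖ = 1 := by
      rw [hθ, norm_div, RCLike.norm_ofReal, abs_of_nonneg (norm_nonneg _)]
      exact div_self (norm_ne_zero_iff.mpr h0)
    have happ : f (θ • z) = ((‖f z‖ : ℝ) : 𝕜) := by
      rw [map_smul, smul_eq_mul, hθ, div_mul_cancel₀ _ h0]
    have h1 := h (θ • z)
    rw [happ, RCLike.ofReal_re, norm_smul, hθn, one_mul] at h1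
    exact h1


/-- Quantitative Bishop–Phelps–Bollobás theorem. -/
lemma bpb [CompleteSpace X] (f : X →L[𝕜] 𝕜) (x : X) (hf : ‖f‖ = 1) (hx : ‖x‖ = 1)
    {η k : ℝ} (hη : 0 < η) (hk : 0 < k) (hk1 : k < 1) (hfx : 1 - η < re (f x)) :
    ∃ (y : X) (g : X →L[𝕜] 𝕜), ‖y‖ = 1 ∧ ‖g‖ = 1 ∧ g y = 1 ∧
      ‖y - x‖ < η / k ∧ ‖g - f‖ ≤ 2 * k + η := by
  -- the elementary bound `re (f z) ≤ ‖z‖`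
  have hre_le : ∀ z : X, re (f z) ≤ ‖z‖ := by
    intro z
    calc re (f z) ≤ ‖f z‖ := RCLike.re_le_norm _
    _ ≤ ‖f‖ * ‖z‖ := f.le_opNorm z
    _ = ‖z‖ := by rw [hf, one_mul]
  -- the Bishop–Phelps "cone order" sets
  set S : X → Set X := fun w => {z | ‖z‖ ≤ 1 ∧ re (f w) + k * ‖z - w‖ ≤ re (f z)} with hS
  have hmemS : ∀ w, ‖w‖ ≤ 1 → w ∈ S w := by
    intro w hw; exact ⟨hw, by simp⟩
  have htrans : ∀ w w' z, w' ∈ S w → z ∈ S w' → z ∈ S w := by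
    rintro w w' z ⟨hw'1, hw'2⟩ ⟨hz1, hz2⟩
    refine ⟨hz1, ?_⟩
    have htri : ‖z - w‖ ≤ ‖z - w'‖ + ‖w' - w‖ := by
      rw [← sub_add_sub_cancel z w' w]; exact norm_add_le _ _
    nlinarith
  set M : X → ℝ := fun w => sSup ((fun z => re (f z)) '' S w) with hM
  have hbdd : ∀ w, ∀ v ∈ (fun z => re (f z)) '' S w, v ≤ 1 := by
    rintro w v ⟨z, hz, rfl⟩
    exact (hre_le z).trans hz.1
  have hMle : ∀ w, ‖w‖ ≤ 1 → M w ≤ 1 := by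
    intro w hw
    exact csSup_le ⟨_, ⟨w, hmemS w hw, rfl⟩⟩ (hbdd w)
  have hleM : ∀ w z, ‖w‖ ≤ 1 → z ∈ S w → re (f z) ≤ M w := by
    intro w z hw hz
    exact le_csSup ⟨1, hbdd w⟩ ⟨z, hz, rfl⟩
  have key : ∀ (n : ℕ) (w : X), ‖w‖ ≤ 1 →
      ∃ z : X, z ∈ S w ∧ M w - η / 2 ^ (n + 1) < re (f z) := by
    intro n w hw
    have hlt : M w - η / 2 ^ (n + 1) < M w := by
      have : (0:ℝ) < η / 2 ^ (n + 1) := by positivity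
      linarith
    have hne : ((fun z => re (f z)) '' S w).Nonempty := ⟨_, ⟨w, hmemS w hw, rfl⟩⟩
    obtain ⟨v, ⟨z, hz, rfl⟩, hv⟩ := exists_lt_of_lt_csSup hne hlt
    exact ⟨z, hz, hv⟩
  choose! step hstep1 hstep2 using key
  set y : ℕ → X := fun n => Nat.rec x (fun n yn => step n yn) n with hy
  have hyrec : ∀ n, y (n + 1) = step n (y n) := fun n => rfl
  have hy0 : y 0 = x := rfl
  have hyball : ∀ n, ‖y n‖ ≤ 1 := by
    intro n
    induction n with
    | zero => exact hx.le
    | succ n ih => rw [hyrec]; exact (hstep1 n (y n) ih).1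
  have hychain : ∀ m n, m ≤ n → y n ∈ S (y m) := by
    intro m n hmn
    induction n, hmn using Nat.le_induction with
    | base => exact hmemS _ (hyball m)
    | succ n hmn ih =>
        rw [hyrec]
        exact htrans _ _ _ ih (hstep1 n (y n) (hyball n))
  set a : ℕ → ℝ := fun n => re (f (y n)) with ha
  have hamono : Monotone a := by
    intro m n hmn
    have := (hychain m n hmn).2
    have h0 : 0 ≤ k * ‖y n - y m‖ := by positivity
    show re (f (y m)) ≤ re (f (y n))
    linarith
  have habdd : BddAbove (Set.range a) := by
    refine ⟨1, ?_⟩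
    rintro v ⟨n, rfl⟩
    exact (hre_le _).trans (hyball n)
  set L : ℝ := ⨆ n, a n with hL
  have haL : Tendsto a atTop (𝓝 L) := tendsto_atTop_ciSup hamono habdd
  have haleL : ∀ n, a n ≤ L := fun n => le_ciSup habdd n
  -- `y` is Cauchy
  have hcauchy : CauchySeq y := by
    rw [Metric.cauchySeq_iff']
    intro ε hε
    obtain ⟨N, hN⟩ := exists_lt_of_lt_ciSup (show L - k * ε < L by nlinarith)
    refine ⟨N, fun n hn => ?_⟩
    have hchain := (hychain N n hn).2
    have h1 : k * ‖y n - y N‖ ≤ a n - a N := by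
      show k * ‖y n - y N‖ ≤ re (f (y n)) - re (f (y N))
      linarith
    have h2 : a n ≤ L := haleL n
    rw [dist_eq_norm]
    nlinarith
  obtain ⟨yy, hyyt⟩ := cauchySeq_tendsto_of_complete hcauchy
  have hyyball : ‖yy‖ ≤ 1 := le_of_tendsto hyyt.norm (Eventually.of_forall hyball)
  have hfyy : re (f yy) = L := by
    have h1 : Tendsto (fun n => re (f (y n))) atTop (𝓝 (re (f yy))) :=
      ((RCLike.continuous_re.comp f.continuous).tendsto yy).comp hyyt
    exact tendsto_nhds_unique h1 haL
  have hyychain : ∀ m, yy ∈ S (y m) := by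
    intro m
    refine ⟨hyyball, ?_⟩
    have h1 : Tendsto (fun n => re (f (y m)) + k * ‖y n - y m‖) atTop
        (𝓝 (re (f (y m)) + k * ‖yy - y m‖)) := by
      exact (((hyyt.sub_const (y m)).norm.const_mul k).const_add _)
    rw [hfyy]
    refine le_of_tendsto_of_tendsto h1 haL ?_
    filter_upwards [eventually_ge_atTop m] with n hn
    exact (hychain m n hn).2
  -- the support property of `yy`
  have hηpow : Tendsto (fun m : ℕ => L + η * (1/2) ^ m) atTop (𝓝 L) := by
    have h0 := tendsto_pow_atTop_nhds_zero_of_lt_one (by norm_num : (0:ℝ) ≤ 1/2)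
      (by norm_num : (1/2:ℝ) < 1)
    have := (h0.const_mul η).const_add L
    simpa using this
  have hsupp : ∀ z : X, ‖z‖ ≤ 1 → re (f z) ≤ re (f yy) + k * ‖z - yy‖ := by
    intro z hz
    by_contra hcon
    push_neg at hcon
    have hzS : z ∈ S yy := ⟨hz, hcon.le⟩
    have hzSm : ∀ m, z ∈ S (y m) := fun m => htrans _ _ _ (hyychain m) hzS
    have hzL : re (f z) ≤ L := by
      refine ge_of_tendsto hηpow ?_
      filter_upwards with m
      have h1 : re (f z) ≤ M (y m) := hleM _ _ (hyball m) (hzSm m)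
      have h2 : M (y m) - η / 2 ^ (m + 1) < a (m + 1) := hstep2 m (y m) (hyball m)
      have h3 : a (m + 1) ≤ L := haleL (m + 1)
      have h4 : η / 2 ^ (m + 1) ≤ η * (1/2) ^ m := by
        rw [div_eq_mul_inv, ← inv_pow]
        have : ((2:ℝ)⁻¹) ^ (m+1) ≤ (2⁻¹) ^ m := by
          apply pow_le_pow_of_le_one (by norm_num) (by norm_num)
          omega
        nlinarith [this]
      nlinarith
    rw [hfyy] at hcon
    have h5 : 0 ≤ k * ‖z - yy‖ := by positivity
    linarith
  have hyyx : k * ‖yy - x‖ ≤ re (f yy) - re (f x) := by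
    have h0 := (hyychain 0).2
    rw [hy0] at h0
    linarith
  have hdist : ‖yy - x‖ < η / k := by
    rw [lt_div_iff₀ hk, mul_comm]
    have h1 : re (f yy) ≤ 1 := (hre_le yy).trans hyyball
    linarith
  have hfyy_lb : 1 - η < re (f yy) := by
    have := hyyx
    have h0 : 0 ≤ k * ‖yy - x‖ := by positivity
    linarith
  -- introduce the real structure on `X`
  letI : NormedSpace ℝ X := NormedSpace.restrictScalars ℝ 𝕜 X
  haveI : IsScalarTower ℝ 𝕜 X := ⟨fun r c z => by
    change (r • c) • z = (algebraMap ℝ 𝕜 r) • (c • z)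
    rw [Algebra.smul_def, mul_smul]⟩
  have hsmulre : ∀ (t : ℝ) (w : X), re (f (t • w)) = t * re (f w) := by
    intro t w
    rw [f.map_smul_of_tower, RCLike.smul_re]
  -- the open convex cone `K`
  set K : Set X := {w : X | k * ‖w‖ < re (f w)} with hK
  have hKopen : IsOpen K := by
    apply isOpen_lt
    · exact continuous_const.mul continuous_norm
    · exact RCLike.continuous_re.comp f.continuous
  have hKsmul : ∀ (t : ℝ), 0 < t → ∀ w ∈ K, t • w ∈ K := by
    intro t ht w hw
    have hn : ‖t • w‖ = t * ‖w‖ := by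
      rw [norm_smul, Real.norm_eq_abs, abs_of_pos ht]
    simp only [hK, Set.mem_setOf_eq] at hw ⊢
    rw [hn, hsmulre]
    nlinarith
  have hKconv : Convex ℝ K := by
    intro w₁ h₁ w₂ h₂ p q hp hq hpq
    simp only [hK, Set.mem_setOf_eq] at h₁ h₂ ⊢
    have hre2 : re (f (p • w₁ + q • w₂)) = p * re (f w₁) + q * re (f w₂) := by
      rw [map_add, map_add, hsmulre, hsmulre]
    have hnrm : ‖p • w₁ + q • w₂‖ ≤ p * ‖w₁‖ + q * ‖w₂‖ := by
      calc ‖p • w₁ + q • w₂‖ ≤ ‖p • w₁‖ + ‖q • w₂‖ := norm_add_le _ _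
      _ = p * ‖w₁‖ + q * ‖w₂‖ := by
          rw [norm_smul, norm_smul, Real.norm_eq_abs, Real.norm_eq_abs,
            abs_of_nonneg hp, abs_of_nonneg hq]
    rw [hre2]
    rcases hp.eq_or_lt with hp0 | hp0
    · have hq1 : q = 1 := by linarith
      rw [← hp0, hq1] at hnrm ⊢
      have h2 := h₂
      nlinarith
    · have hs1 : p * (k * ‖w₁‖) < p * re (f w₁) := by nlinarith
      have hs2 : q * (k * ‖w₂‖) ≤ q * re (f w₂) := by nlinarith
      nlinarith
  have hKne : K.Nonempty := by
    rcases Set.eq_empty_or_nonempty K with hemp | hne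
    · exfalso
      have hall : ∀ w : X, re (f w) ≤ k * ‖w‖ := by
        intro w
        by_contra hcon
        push_neg at hcon
        exact Set.eq_empty_iff_forall_notMem.mp hemp w hcon
      have hfk : ‖f‖ ≤ k := f.opNorm_le_bound hk.le (norm_apply_le_of_re_le hall)
      rw [hf] at hfk
      linarith
    · exact hne
  -- separation
  set T : Set X := (fun w => yy + w) '' K with hT
  have hTopen : IsOpen T := (isOpenMap_add_left yy) K hKopen
  have hTconv : Convex ℝ T := hKconv.translate yy
  have hTdisj : Disjoint T (Metric.closedBall (0:X) 1) := by
    rw [Set.disjoint_left]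
    rintro z ⟨w, hwK, rfl⟩ hzball
    have hz1 : ‖yy + w‖ ≤ 1 := by rwa [mem_closedBall_zero_iff] at hzball
    have h1 := hsupp (yy + w) hz1
    have h2 : re (f (yy + w)) = re (f yy) + re (f w) := by rw [map_add, map_add]
    have h3 : ‖yy + w - yy‖ = ‖w‖ := by rw [add_sub_cancel_left]
    simp only [hK, Set.mem_setOf_eq] at hwK
    rw [h2, h3] at h1
    linarith
  obtain ⟨p, u, hp1, hp2⟩ := _root_.geometric_hahn_banach_open hTconv hTopen
    (_root_.convex_closedBall (0:X) 1) hTdisj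
  set r : X →L[ℝ] ℝ := -p with hrdef
  set c : ℝ := -u with hcdef
  have hr1 : ∀ w ∈ K, c < r (yy + w) := by
    intro w hw
    have := hp1 _ ⟨w, hw, rfl⟩
    rw [hrdef, hcdef, ContinuousLinearMap.neg_apply]
    linarith
  have hr2 : ∀ b : X, ‖b‖ ≤ 1 → r b ≤ c := by
    intro b hb
    have := hp2 b (mem_closedBall_zero_iff.mpr hb)
    rw [hrdef, hcdef, ContinuousLinearMap.neg_apply]
    linarith
  obtain ⟨w₀, hw₀⟩ := hKne
  have hryy_le : r yy ≤ c := hr2 yy hyyball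
  have hcley : c ≤ r yy := by
    by_contra hcon
    push_neg at hcon
    set d : ℝ := c - r yy with hddef
    have hd : 0 < d := by rw [hddef]; linarith
    set t : ℝ := d / (2 * (|r w₀| + 1)) with htdef
    have hApos : (0:ℝ) < |r w₀| + 1 := by positivity
    have ht : 0 < t := by rw [htdef]; positivity
    have h1 : c < r (yy + t • w₀) := hr1 _ (hKsmul t ht w₀ hw₀)
    have h2 : r (yy + t • w₀) = r yy + t * r w₀ := by
      rw [map_add, map_smul, smul_eq_mul]
    have h3 : t * r w₀ ≤ t * (|r w₀| + 1) := by
      have := le_abs_self (r w₀)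
      nlinarith
    have h4 : t * (|r w₀| + 1) = d / 2 := by
      rw [htdef]
      field_simp
    rw [h2] at h1
    rw [h4] at h3
    rw [hddef] at h3
    linarith
  have hryy : r yy = c := le_antisymm hryy_le hcley
  have hrK : ∀ w ∈ K, 0 < r w := by
    intro w hw
    have h1 := hr1 w hw
    rw [map_add, hryy] at h1
    linarith
  have hc0 : 0 ≤ c := by
    have h1 := hr2 0 (by simp)
    rw [map_zero] at h1
    linarith
  have hrnorm_le : ‖r‖ ≤ c := by
    apply r.opNorm_le_bound hc0
    intro z
    rcases eq_or_ne z 0 with rfl | hz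
    · simp
    · have hzpos : 0 < ‖z‖ := norm_pos_iff.mpr hz
      have hz' : ‖(‖z‖⁻¹ : ℝ) • z‖ ≤ 1 := by
        rw [norm_smul, Real.norm_eq_abs, abs_of_pos (inv_pos.mpr hzpos),
          inv_mul_cancel₀ hzpos.ne']
      have h1 : r ((‖z‖⁻¹:ℝ) • z) ≤ c := hr2 _ hz'
      have h2' : r (-((‖z‖⁻¹:ℝ) • z)) ≤ c := hr2 _ (by rwa [norm_neg])
      rw [map_neg] at h2'
      have h3 : r ((‖z‖⁻¹:ℝ) • z) = ‖z‖⁻¹ * r z := by rw [map_smul, smul_eq_mul]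
      rw [h3] at h1 h2'
      have h4 : r z = ‖z‖ * (‖z‖⁻¹ * r z) := by field_simp
      rw [Real.norm_eq_abs, abs_le]
      constructor
      · rw [h4]; nlinarith
      · rw [h4]; nlinarith
  have hcpos : 0 < c := by
    rcases hc0.eq_or_lt with hc0' | hc0'
    · exfalso
      have hr0 : ‖r‖ ≤ 0 := by rw [hc0']; exact hrnorm_le
      have : r = 0 := by
        have := le_antisymm hr0 (norm_nonneg r)
        rwa [norm_eq_zero] at this
      have h1 := hrK w₀ hw₀
      rw [this] at h1
      simp at h1
    · exact hc0'
  have hrnorm : ‖r‖ = c := by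
    refine le_antisymm hrnorm_le ?_
    calc c = r yy := hryy.symm
    _ ≤ |r yy| := le_abs_self _
    _ ≤ ‖r‖ * ‖yy‖ := by
        have := r.le_opNorm yy
        rwa [Real.norm_eq_abs] at this
    _ ≤ ‖r‖ * 1 := by gcongr
    _ = ‖r‖ := mul_one _
  have hyy1 : ‖yy‖ = 1 := by
    refine le_antisymm hyyball ?_
    have h1 : c ≤ ‖r‖ * ‖yy‖ := by
      calc c = r yy := hryy.symm
      _ ≤ |r yy| := le_abs_self _
      _ ≤ ‖r‖ * ‖yy‖ := by
          have := r.le_opNorm yy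
          rwa [Real.norm_eq_abs] at this
    rw [hrnorm] at h1
    nlinarith
  -- the 𝕜-linear functional
  set r' : X →L[ℝ] ℝ := (c⁻¹ : ℝ) • r with hr'def
  have hr'app : ∀ z : X, r' z = c⁻¹ * r z := by
    intro z
    rw [hr'def, ContinuousLinearMap.smul_apply, smul_eq_mul]
  have hr'norm : ‖r'‖ = 1 := by
    rw [hr'def, clm_norm_smul', Real.norm_eq_abs, abs_of_pos (inv_pos.mpr hcpos), hrnorm]
    field_simp
  have hr'yy : r' yy = 1 := by
    rw [hr'app, hryy]
    field_simp
  set g : X →L[𝕜] 𝕜 := StrongDual.extendRCLike r' with hgdef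
  have hgre : ∀ z : X, re (g z) = r' z := by
    intro z
    rw [hgdef, ContinuousLinearMap.extendTo𝕜'_apply]
    simp [RCLike.ofReal_re, RCLike.mul_re, RCLike.I_re, RCLike.ofReal_im]
  have hgnorm : ‖g‖ = 1 := by
    rw [hgdef, ContinuousLinearMap.norm_extendTo𝕜', hr'norm]
  have hgyy : g yy = 1 := by
    refine aux_unit' ?_ ?_
    · calc ‖g yy‖ ≤ ‖g‖ * ‖yy‖ := g.le_opNorm yy
      _ = 1 := by rw [hgnorm, hyy1, mul_one]
    · rw [hgre, hr'yy]
  have hgK : ∀ w : X, k * ‖w‖ < re (f w) → 0 ≤ re (g w) := by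
    intro w hw
    rw [hgre, hr'app]
    have h1 := hrK w hw
    positivity
  have hgsmul : ∀ (t : ℝ) (w : X), re (g (t • w)) = t * re (g w) := by
    intro t w
    rw [g.map_smul_of_tower, RCLike.smul_re]
  -- Step A : `re (f u) ≤ k‖u‖` on the real kernel of `g`
  have hA : ∀ u : X, re (g u) = 0 → re (f u) ≤ k * ‖u‖ := by
    intro v hv
    apply le_of_forall_pos_le_add
    intro ε hε
    set δ : ℝ := ε / 2 with hδdef
    have hδ : 0 < δ := by rw [hδdef]; positivity
    have hgneg : re (g (v - δ • yy)) = -δ := by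
      rw [map_sub, map_sub, hgsmul, hv]
      rw [show re (g yy) = 1 by rw [hgre, hr'yy]]
      ring
    have hnotK : ¬ (k * ‖v - δ • yy‖ < re (f (v - δ • yy))) := by
      intro hcon
      have := hgK _ hcon
      rw [hgneg] at this
      linarith
    push_neg at hnotK
    have h1 : re (f (v - δ • yy)) = re (f v) - δ * re (f yy) := by
      rw [map_sub, map_sub, hsmulre]
    have h2 : ‖v - δ • yy‖ ≤ ‖v‖ + δ := by
      calc ‖v - δ • yy‖ ≤ ‖v‖ + ‖δ • yy‖ := norm_sub_le _ _
      _ = ‖v‖ + δ := by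
          rw [norm_smul, Real.norm_eq_abs, abs_of_pos hδ, hyy1, mul_one]
    have h3 : re (f yy) ≤ 1 := (hre_le yy).trans hyyball
    rw [h1] at hnotK
    have h5 : k * ‖v - δ • yy‖ ≤ k * (‖v‖ + δ) := mul_le_mul_of_nonneg_left h2 hk.le
    have h6 : k * δ ≤ 1 * δ := mul_le_mul_of_nonneg_right hk1.le hδ.le
    have h7 : δ * re (f yy) ≤ δ * 1 := mul_le_mul_of_nonneg_left h3 hδ.le
    have h8 : ε = 2 * δ := by rw [hδdef]; ring
    linarith
  -- Step B : the parallel hyperplane estimate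
  set η₀ : ℝ := 1 - re (f yy) with hη₀def
  have hη₀0 : 0 ≤ η₀ := by
    rw [hη₀def]
    have := (hre_le yy).trans hyyball
    linarith
  have hη₀η : η₀ < η := by rw [hη₀def]; linarith
  have hB : ∀ z : X, re (f z) - re (g z) ≤ (2 * k + η₀) * ‖z‖ := by
    intro z
    set t : ℝ := re (g z) with htdef
    have htabs : |t| ≤ ‖z‖ := by
      calc |t| ≤ ‖g z‖ := abs_re_le_norm _
      _ ≤ ‖g‖ * ‖z‖ := g.le_opNorm z
      _ = ‖z‖ := by rw [hgnorm, one_mul]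
    set v : X := z - t • yy with hvdef
    have hgv : re (g v) = 0 := by
      rw [hvdef, map_sub, map_sub, hgsmul]
      rw [show re (g yy) = 1 by rw [hgre, hr'yy]]
      rw [← htdef]
      ring
    have hfv := hA v hgv
    have hnv : ‖v‖ ≤ 2 * ‖z‖ := by
      calc ‖v‖ ≤ ‖z‖ + ‖t • yy‖ := norm_sub_le _ _
      _ = ‖z‖ + |t| := by rw [norm_smul, Real.norm_eq_abs, hyy1, mul_one]
      _ ≤ 2 * ‖z‖ := by linarith
    have hfz : re (f z) = re (f v) + t * re (f yy) := by
      rw [hvdef, map_sub, map_sub, hsmulre]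
      ring
    have h6 : t * re (f yy) - t ≤ |t| * η₀ := by
      have e1 : t * re (f yy) - t = -t * η₀ := by rw [hη₀def]; ring
      rw [e1]
      exact mul_le_mul_of_nonneg_right (neg_le_abs t) hη₀0
    have h7 : |t| * η₀ ≤ ‖z‖ * η₀ := mul_le_mul_of_nonneg_right htabs hη₀0
    have h8 : k * ‖v‖ ≤ k * (2 * ‖z‖) := mul_le_mul_of_nonneg_left hnv hk.le
    linarith
  have hfg : ‖g - f‖ ≤ 2 * k + η := by
    have hbound : ∀ z : X, re ((f - g) z) ≤ (2 * k + η₀) * ‖z‖ := by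
      intro z
      rw [ContinuousLinearMap.sub_apply, map_sub]
      exact hB z
    have h1 : ‖f - g‖ ≤ 2 * k + η₀ :=
      (f - g).opNorm_le_bound (by positivity) (norm_apply_le_of_re_le hbound)
    rw [norm_sub_rev] at h1
    linarith
  exact ⟨yy, g, hyy1, hgnorm, hgyy, hdist, hfg⟩



lemma seb_norm_pos' {f : X →L[𝕜] 𝕜} {x₀ : X} (h : StronglyExposesBall f x₀)
    (hx : x₀ ≠ 0) : 0 < ‖f‖ := by
  rcases h with ⟨hx1, -, hseq⟩
  rcases (norm_nonneg f).lt_or_eq with h0 | h0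
  · exact h0
  exfalso
  have hf0 : f = 0 := by rwa [eq_comm, norm_eq_zero] at h0
  have h1 : Tendsto (fun _ : ℕ => -x₀) atTop (𝓝 x₀) := by
    apply hseq
    · intro n; simpa using hx1
    · simp [hf0, ← h0]
  have h2 : x₀ = -x₀ := tendsto_nhds_unique h1 tendsto_const_nhds
  apply hx
  have h3 : (2:𝕜) • x₀ = 0 := by rw [two_smul]; nth_rewrite 1 [h2]; simp
  simpa [smul_eq_zero] using h3


/-- Perturbation lemma: given a norm-attaining pair `(y, g)` and a strongly exposing
functional at `y`, we can move `g` a little to make it strongly expose `y`. -/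
lemma perturb {y : X} {g : X →L[𝕜] 𝕜}
    (hSE : ∀ x : X, ‖x‖ = 1 → ∃ f : X →L[𝕜] 𝕜, StronglyExposesBall f x)
    (hy : ‖y‖ = 1) (hg : ‖g‖ = 1) (hgy : g y = 1) {δ : ℝ} (hδ : 0 < δ) :
    ∃ g' : X →L[𝕜] 𝕜, StronglyExposesBall g' y ∧ ‖g'‖ = 1 ∧ g' y = 1 ∧ ‖g' - g‖ ≤ 2 * δ := by
  obtain ⟨h, hh⟩ := hSE y hy
  have hy0 : y ≠ 0 := by intro h0; rw [h0, norm_zero] at hy; norm_num at hy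
  have hc : 0 < ‖h‖ := seb_norm_pos' hh hy0
  set c : ℝ := ‖h‖ with hcdef
  set h'' : X →L[𝕜] 𝕜 := ((c⁻¹ : ℝ) : 𝕜) • h with hh''def
  have hnorm'' : ‖h''‖ = 1 := by
    rw [hh''def, clm_norm_smul', RCLike.norm_ofReal, abs_of_pos (inv_pos.mpr hc)]
    field_simp
    exact hcdef.symm
  have hre'' : ∀ z : X, re (h'' z) = c⁻¹ * re (h z) := by
    intro z
    rw [hh''def]
    rw [ContinuousLinearMap.smul_apply, smul_eq_mul, RCLike.re_ofReal_mul]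
  have hre''y : re (h'' y) = 1 := by
    rw [hre'' y, hh.2.1, ← hcdef]; field_simp
  have hh''y : h'' y = 1 := by
    apply aux_unit' _ hre''y
    calc ‖h'' y‖ ≤ ‖h''‖ * ‖y‖ := h''.le_opNorm y
    _ = 1 := by rw [hnorm'', hy]; ring
  set g' : X →L[𝕜] 𝕜 := (((1 + δ)⁻¹ : ℝ) : 𝕜) • (g + ((δ : ℝ) : 𝕜) • h'') with hg'def
  have h1δ : (0:ℝ) < 1 + δ := by linarith
  have h1δ' : (((1 + δ : ℝ)) : 𝕜) ≠ 0 := by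
    rw [ne_eq, RCLike.ofReal_eq_zero]; linarith
  have hg'y : g' y = 1 := by
    rw [hg'def]
    simp only [ContinuousLinearMap.smul_apply, ContinuousLinearMap.add_apply, hgy, hh''y,
      smul_eq_mul, mul_one]
    have hcast : (1 + ((δ:ℝ):𝕜)) = ((1 + δ : ℝ) : 𝕜) := by push_cast; ring
    rw [hcast, RCLike.ofReal_inv, inv_mul_cancel₀ h1δ']
  have hg'norm : ‖g'‖ = 1 := by
    apply le_antisymm
    · rw [hg'def]
      calc ‖(((1 + δ)⁻¹ : ℝ) : 𝕜) • (g + ((δ : ℝ) : 𝕜) • h'')‖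
          ≤ (1+δ)⁻¹ * (‖g‖ + δ * ‖h''‖) := by
            rw [clm_norm_smul', RCLike.norm_ofReal, abs_of_pos (inv_pos.mpr h1δ)]
            gcongr
            · exact (norm_add_le _ _).trans (by rw [clm_norm_smul', RCLike.norm_ofReal,
                abs_of_pos hδ])
      _ = 1 := by rw [hg, hnorm'']; field_simp
    · calc (1:ℝ) = ‖g' y‖ := by rw [hg'y]; simp
      _ ≤ ‖g'‖ * ‖y‖ := g'.le_opNorm y
      _ = ‖g'‖ := by rw [hy, mul_one]
  refine ⟨g', ⟨hy.le, by rw [hg'y, hg'norm]; simp, ?_⟩, hg'norm, hg'y, ?_⟩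
  · -- sequence condition
    intro u hu hlim
    rw [hg'norm] at hlim
    have hre' : ∀ z : X, re (g' z) = (1+δ)⁻¹ * (re (g z) + δ * re (h'' z)) := by
      intro z
      rw [hg'def]
      simp only [ContinuousLinearMap.smul_apply, ContinuousLinearMap.add_apply, smul_eq_mul]
      rw [RCLike.re_ofReal_mul, map_add, RCLike.re_ofReal_mul]
    set a : ℕ → ℝ := fun n => re (g (u n)) with hadef
    set b : ℕ → ℝ := fun n => re (h'' (u n)) with hbdef
    have ha1 : ∀ n, a n ≤ 1 := by
      intro n
      calc a n ≤ ‖g (u n)‖ := RCLike.re_le_norm _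
      _ ≤ ‖g‖ * ‖u n‖ := g.le_opNorm _
      _ ≤ 1 := by rw [hg, one_mul]; exact hu n
    have hb1 : ∀ n, b n ≤ 1 := by
      intro n
      calc b n ≤ ‖h'' (u n)‖ := RCLike.re_le_norm _
      _ ≤ ‖h''‖ * ‖u n‖ := h''.le_opNorm _
      _ ≤ 1 := by rw [hnorm'', one_mul]; exact hu n
    have hsum : Tendsto (fun n => a n + δ * b n) atTop (𝓝 (1 + δ)) := by
      have := hlim.const_mul (1+δ)
      rw [mul_one] at this
      convert this using 2 with n
      rw [hre', ← mul_assoc, mul_inv_cancel₀ (by positivity), one_mul]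
    have hbtend : Tendsto b atTop (𝓝 1) := by
      have hlow : Tendsto (fun n => (a n + δ * b n - 1) / δ) atTop (𝓝 1) := by
        have := (hsum.sub_const 1).div_const δ
        convert this using 2
        field_simp
        ring
      apply tendsto_of_tendsto_of_tendsto_of_le_of_le hlow tendsto_const_nhds
      · intro n
        have := ha1 n
        rw [div_le_iff₀ hδ]
        nlinarith
      · exact hb1
    have hhtend : Tendsto (fun n => re (h (u n))) atTop (𝓝 ‖h‖) := by
      have : ∀ n, re (h (u n)) = c * b n := by
        intro n
        rw [hbdef]; simp only []
        rw [hre'']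
        field_simp
      simp only [this]
      have := hbtend.const_mul c
      rw [mul_one] at this
      exact this
    exact hh.2.2 u hu hhtend
  · -- norm estimate
    have heq : g' - g = (((δ/(1+δ) : ℝ)) : 𝕜) • (h'' - g) := by
      ext z
      simp only [hg'def, ContinuousLinearMap.sub_apply, ContinuousLinearMap.smul_apply,
        ContinuousLinearMap.add_apply, smul_eq_mul]
      have hne : (1 + ((δ:ℝ):𝕜)) ≠ 0 := by
        have hc2 : ((1+δ:ℝ):𝕜) = 1 + ((δ:ℝ):𝕜) := by push_cast; ring
        rw [← hc2]; exact h1δ'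
      simp only [RCLike.ofReal_div]
      rw [div_eq_mul_inv, RCLike.ofReal_inv]
      have hc2 : ((1+δ:ℝ):𝕜) = 1 + ((δ:ℝ):𝕜) := by push_cast; ring
      rw [hc2]
      field_simp
      ring
    rw [heq, clm_norm_smul', RCLike.norm_ofReal, abs_of_pos (div_pos hδ h1δ)]
    calc δ/(1+δ) * ‖h'' - g‖ ≤ δ/(1+δ) * (‖h''‖ + ‖g‖) := by
          gcongr; exact norm_sub_le _ _
    _ ≤ δ * 2 := by
        rw [hnorm'', hg]
        rw [div_mul_eq_mul_div, div_le_iff₀ h1δ]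
        nlinarith
    _ = 2 * δ := by ring


end AuxLemmas

theorem stmt10 {𝕜 X : Type} [RCLike 𝕜]
    [NormedAddCommGroup X] [NormedSpace 𝕜 X] [CompleteSpace X]
    (h : ∀ x : X, ‖x‖ = 1 → ∃ f : X →L[𝕜] 𝕜, StronglyExposesBall f x) :
    (∀ (x : X) (f : X →L[𝕜] 𝕜), ‖x‖ = 1 → ‖f‖ = 1 → f x = 1 →
      ∀ ε : ℝ, 0 < ε → ∃ (y : X) (g : X →L[𝕜] 𝕜),
        (∃ h' : X →L[𝕜] 𝕜, StronglyExposesBall h' y) ∧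
        (∃ y' : X, StronglyExposesBall g y') ∧
        ‖g‖ = 1 ∧ g y = 1 ∧ ‖y - x‖ < ε ∧ ‖g - f‖ < ε) ∧
    (∀ ε : ℝ, 0 < ε → ε < 1 → ∃ η : ℝ, 0 < η ∧
      ∀ (x : X) (f : X →L[𝕜] 𝕜), ‖x‖ = 1 → ‖f‖ = 1 → re (f x) > 1 - η →
        ∃ (y : X) (g : X →L[𝕜] 𝕜), (∃ y' : X, StronglyExposesBall g y') ∧
          ‖y‖ = 1 ∧ ‖g‖ = 1 ∧ g y = 1 ∧ ‖g - f‖ < ε ∧ ‖y - x‖ < ε) := by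
  constructor
  · -- density at norm-attaining pairs
    intro x f hx hf hfx ε hε
    have hδ : (0:ℝ) < ε / 3 := by positivity
    obtain ⟨g', hseb, hg'n, hg'x, hg'g⟩ := perturb h hx hf hfx hδ
    refine ⟨x, g', h x hx, ⟨x, hseb⟩, hg'n, hg'x, by simpa using hε, ?_⟩
    calc ‖g' - f‖ ≤ 2 * (ε / 3) := hg'g
    _ < ε := by linarith
  · -- property [P]
    intro ε hε hε1
    refine ⟨ε ^ 2 / 32, by positivity, ?_⟩
    intro x f hx hf hfx
    obtain ⟨y, g₀, hy1, hg₀n, hg₀y, hyx, hg₀f⟩ := bpb f x hf hx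
      (η := ε ^ 2 / 32) (k := ε / 8) (by positivity) (by positivity)
      (by linarith) (by linarith [hfx])
    obtain ⟨g, hseb, hgn, hgy, hgg₀⟩ := perturb h hy1 hg₀n hg₀y
      (δ := ε / 8) (by positivity)
    refine ⟨y, g, ⟨y, hseb⟩, hy1, hgn, hgy, ?_, ?_⟩
    · have htri : ‖g - f‖ ≤ ‖g - g₀‖ + ‖g₀ - f‖ := by
        have h0 := norm_add_le (g - g₀) (g₀ - f)
        rwa [sub_add_sub_cancel] at h0
      have hsq : ε ^ 2 ≤ ε := by nlinarith
      calc ‖g - f‖ ≤ ‖g - g₀‖ + ‖g₀ - f‖ := htri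
      _ ≤ 2 * (ε / 8) + (2 * (ε / 8) + ε ^ 2 / 32) := by linarith
      _ < ε := by nlinarith
    · have heq : ε ^ 2 / 32 / (ε / 8) = ε / 4 := by
        field_simp
        ring
      rw [heq] at hyx
      linarith
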